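/- Let Γ be a group generated by a finite symmetric set S, and let d_0 ∈ M_{|S|×1}(ℝΓ) be the column vector with entries (1 − s)_{s ∈ S}. Then the set of hermitian elements of the augmentation ideal I(Γ) coincides with the image under D_0 of the hermitian matrices: I(Γ)^h = { d_0* a d_0 : a ∈ M_{|S|}(ℝΓ), a* = a }. In particular, for every γ ∈ Γ there exists a row vector a ∈ M_{1×|S|}(ℝΓ) with 1 − γ = a d_0, and hence 2 − γ − γ⁻¹ = (1−γ)*(1−γ) = d_0* a* a d_0. -/

import Mathlib

open scoped BigOperators
noncomputable section

universe u v w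

/-- The star operation on the real group algebra, determined by `γ ↦ γ⁻¹`. -/
def rgStar {G : Type u} [Group G] (x : MonoidAlgebra ℝ G) : MonoidAlgebra ℝ G :=
  MonoidAlgebra.ofCoeff (Finsupp.mapDomain (fun g : G => g⁻¹) x.coeff)

/-- The adjoint of a matrix over the real group algebra:
transpose and apply `rgStar` entrywise. -/
def adjM {G : Type u} [Group G] {m n : Type*}
    (a : Matrix m n (MonoidAlgebra ℝ G)) : Matrix n m (MonoidAlgebra ℝ G) :=
  Matrix.of fun i j => rgStar (a j i)

/-- A square matrix over the real group algebra is a sum of hermitian squares. -/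
def IsSOS {G : Type u} [Group G] {p : Type*} [Fintype p]
    (x : Matrix p p (MonoidAlgebra ℝ G)) : Prop :=
  ∃ (m : ℕ) (a : Fin m → Matrix p p (MonoidAlgebra ℝ G)),
    x = ∑ i, adjM (a i) * a i

/-- A unitary representation of `G` on a real Hilbert space. -/
structure URep (G : Type u) [Group G] : Type (max u (v + 1)) where
  H : Type v
  [normed : NormedAddCommGroup H]
  [ips : InnerProductSpace ℝ H]
  [complete : CompleteSpace H]
  π : G →* (H →L[ℝ] H)
  isometric : ∀ (γ : G) (x : H), ‖π γ x‖ = ‖x‖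

attribute [instance] URep.normed URep.ips URep.complete

/-- The extension of a unitary representation to the real group algebra. -/
noncomputable def URep.alg {G : Type u} [Group G] (ρ : URep.{u, v} G) :
    MonoidAlgebra ℝ G →ₐ[ℝ] (ρ.H →L[ℝ] ρ.H) :=
  MonoidAlgebra.lift ℝ (ρ.H →L[ℝ] ρ.H) G ρ.π

/-- The entrywise application of a unitary representation to a matrix over the
real group algebra, acting on tuples of vectors. -/
noncomputable def URep.mat {G : Type u} [Group G] (ρ : URep.{u, v} G)
    {p q : Type*} [Fintype q] (a : Matrix p q (MonoidAlgebra ℝ G))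
    (z : q → ρ.H) : p → ρ.H :=
  fun i => ∑ j, ρ.alg (a i j) (z j)

/-- The inner product on a finite power of a real Hilbert space. -/
noncomputable def pInner {G : Type u} [Group G] (ρ : URep.{u, v} G)
    {p : Type*} [Fintype p] (x y : p → ρ.H) : ℝ :=
  ∑ i, inner ℝ (x i) (y i)

section AuxRG
variable {G : Type u} [Group G]

lemma rgStar_add (x y : MonoidAlgebra ℝ G) : rgStar (x + y) = rgStar x + rgStar y :=
  congrArg MonoidAlgebra.ofCoeff Finsupp.mapDomain_add

lemma rgStar_zero : rgStar (0 : MonoidAlgebra ℝ G) = 0 := congrArg MonoidAlgebra.ofCoeff Finsupp.mapDomain_zero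

lemma rgStar_smul (c : ℝ) (x : MonoidAlgebra ℝ G) : rgStar (c • x) = c • rgStar x :=
  congrArg MonoidAlgebra.ofCoeff (Finsupp.mapDomain_smul c x.coeff)

lemma rgStar_single (a : G) (b : ℝ) :
    rgStar (MonoidAlgebra.single a b) = MonoidAlgebra.single a⁻¹ b :=
    congrArg MonoidAlgebra.ofCoeff Finsupp.mapDomain_single

lemma rgStar_of (g : G) : rgStar (MonoidAlgebra.of ℝ G g) = MonoidAlgebra.of ℝ G g⁻¹ :=
  rgStar_single g 1

lemma rgStar_one : rgStar (1 : MonoidAlgebra ℝ G) = 1 := by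
  have := rgStar_single (1 : G) (1 : ℝ)
  rw [inv_one] at this
  rw [MonoidAlgebra.one_def]; exact this

lemma rgStar_neg (x : MonoidAlgebra ℝ G) : rgStar (-x) = - rgStar x := by
  have := rgStar_smul (-1) x; simpa using this

lemma rgStar_sub (x y : MonoidAlgebra ℝ G) : rgStar (x - y) = rgStar x - rgStar y := by
  rw [sub_eq_add_neg, rgStar_add, rgStar_neg, sub_eq_add_neg]

lemma rgStar_mul (x y : MonoidAlgebra ℝ G) : rgStar (x * y) = rgStar y * rgStar x := by
  induction x using MonoidAlgebra.induction_linear with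
  | zero => simp [rgStar_zero]
  | add f g hf hg => rw [add_mul, rgStar_add, hf, hg, rgStar_add, mul_add]
  | single a b =>
    induction y using MonoidAlgebra.induction_linear with
    | zero => simp [rgStar_zero]
    | add f g hf hg => rw [mul_add, rgStar_add, hf, hg, rgStar_add, add_mul]
    | single c d =>
      rw [MonoidAlgebra.single_mul_single, rgStar_single, rgStar_single, rgStar_single,
        MonoidAlgebra.single_mul_single, mul_inv_rev, mul_comm d b]

lemma rgStar_rgStar (x : MonoidAlgebra ℝ G) : rgStar (rgStar x) = x := by
  induction x using MonoidAlgebra.induction_linear with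
  | zero => simp [rgStar_zero]
  | add f g hf hg => rw [rgStar_add, rgStar_add, hf, hg]
  | single a b => rw [rgStar_single, rgStar_single, inv_inv]

lemma rgStar_sum {ι : Type*} (s : Finset ι) (f : ι → MonoidAlgebra ℝ G) :
    rgStar (∑ i ∈ s, f i) = ∑ i ∈ s, rgStar (f i) := by
  classical
  induction s using Finset.induction with
  | empty => simp [rgStar_zero]
  | insert _ _ h ih => rw [Finset.sum_insert h, Finset.sum_insert h, rgStar_add, ih]

def aug : MonoidAlgebra ℝ G →ₐ[ℝ] ℝ := MonoidAlgebra.lift ℝ ℝ G 1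

lemma aug_apply (x : MonoidAlgebra ℝ G) : aug x = Finsupp.sum x.coeff fun _ c => c := by
  rw [aug, MonoidAlgebra.lift_apply]
  simp [Finsupp.sum]

lemma aug_rgStar (x : MonoidAlgebra ℝ G) : aug (rgStar x) = aug x := by
  induction x using MonoidAlgebra.induction_linear with
  | zero => simp [rgStar_zero]
  | add f g hf hg => rw [rgStar_add, map_add, map_add, hf, hg]
  | single a b => rw [rgStar_single, aug_apply, aug_apply, MonoidAlgebra.coeff_single, MonoidAlgebra.coeff_single,
      Finsupp.sum_single_index rfl, Finsupp.sum_single_index rfl]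

lemma adjM_apply {m n : Type*} (a : Matrix m n (MonoidAlgebra ℝ G)) (i : n) (j : m) :
    adjM a i j = rgStar (a j i) := rfl

lemma adjM_mul {m n p : Type*} [Fintype n] (a : Matrix m n (MonoidAlgebra ℝ G))
    (b : Matrix n p (MonoidAlgebra ℝ G)) : adjM (a * b) = adjM b * adjM a := by
  ext i j
  simp only [adjM_apply, Matrix.mul_apply, rgStar_sum, rgStar_mul]

lemma adjM_adjM {m n : Type*} (a : Matrix m n (MonoidAlgebra ℝ G)) :
    adjM (adjM a) = a := by
  ext i j; simp [adjM_apply, rgStar_rgStar]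

lemma adjM_smul {m n : Type*} (c : ℝ) (a : Matrix m n (MonoidAlgebra ℝ G)) :
    adjM (c • a) = c • adjM a := by
  ext i j; simp [adjM_apply, rgStar_smul]

lemma adjM_sum {ι m n : Type*} (s : Finset ι) (f : ι → Matrix m n (MonoidAlgebra ℝ G)) :
    adjM (∑ i ∈ s, f i) = ∑ i ∈ s, adjM (f i) := by
  ext i j : 2
  rw [adjM_apply, Matrix.sum_apply, Matrix.sum_apply, rgStar_sum]
  rfl

lemma aug_of (g : G) : aug (MonoidAlgebra.of ℝ G g) = 1 := by
  rw [aug_apply, MonoidAlgebra.of_apply, MonoidAlgebra.coeff_single, Finsupp.sum_single_index rfl]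

lemma exists_row {G : Type u} [Group G] (S : Finset G)
    (hgen : Subgroup.closure (S : Set G) = ⊤)
    (d0 : Matrix ↥S (Fin 1) (MonoidAlgebra ℝ G))
    (hd0 : ∀ (s : ↥S) (j : Fin 1), d0 s j = 1 - MonoidAlgebra.of ℝ G (s : G))
    (γ : G) : ∃ a : Matrix (Fin 1) ↥S (MonoidAlgebra ℝ G),
      (a * d0) 0 0 = 1 - MonoidAlgebra.of ℝ G γ := by
  classical
  have hmem : γ ∈ Subgroup.closure (S : Set G) := hgen ▸ Subgroup.mem_top γ
  induction hmem using Subgroup.closure_induction with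
  | mem s hs =>
    refine ⟨Matrix.of fun _ t => if t = (⟨s, hs⟩ : ↥S) then 1 else 0, ?_⟩
    rw [Matrix.mul_apply]
    rw [Finset.sum_eq_single (⟨s, hs⟩ : ↥S)]
    · simp [hd0]
    · intro b _ hb; simp [Matrix.of_apply, hb]
    · intro h; exact absurd (Finset.mem_univ _) h
  | one => exact ⟨0, by rw [Matrix.zero_mul]; simp [← MonoidAlgebra.one_def]⟩
  | mul x y _ _ hx hy =>
    obtain ⟨a, ha⟩ := hx
    obtain ⟨b, hb⟩ := hy
    refine ⟨a + MonoidAlgebra.of ℝ G x • b, ?_⟩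
    have hsm : ∀ (c : MonoidAlgebra ℝ G) (m : Matrix (Fin 1) ↥S (MonoidAlgebra ℝ G)),
        ((c • m) * d0) 0 0 = c * ((m * d0) 0 0) := by
      intro c m
      rw [Matrix.mul_apply, Matrix.mul_apply, Finset.mul_sum]
      exact Finset.sum_congr rfl fun t _ => by
        rw [Matrix.smul_apply, smul_eq_mul, mul_assoc]
    rw [Matrix.add_mul, Matrix.add_apply, ha, hsm, hb, mul_sub, mul_one, ← map_mul]
    abel
  | inv x _ hx =>
    obtain ⟨a, ha⟩ := hx
    refine ⟨(-(MonoidAlgebra.of ℝ G x⁻¹)) • a, ?_⟩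
    have : (((-(MonoidAlgebra.of ℝ G x⁻¹)) • a) * d0) 0 0
        = (-(MonoidAlgebra.of ℝ G x⁻¹)) * ((a * d0) 0 0) := by
      rw [Matrix.mul_apply, Matrix.mul_apply, Finset.mul_sum]
      exact Finset.sum_congr rfl fun t _ => by
        rw [Matrix.smul_apply, smul_eq_mul, mul_assoc]
    rw [this, ha, neg_mul, mul_sub, mul_one, ← map_mul, inv_mul_cancel, map_one]
    abel

lemma square_entry {G : Type u} [Group G] (S : Finset G)
    (d0 : Matrix ↥S (Fin 1) (MonoidAlgebra ℝ G))
    (γ : G) (a : Matrix (Fin 1) ↥S (MonoidAlgebra ℝ G))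
    (ha : (a * d0) 0 0 = 1 - MonoidAlgebra.of ℝ G γ) :
    (adjM d0 * (adjM a * a) * d0) 0 0 =
      2 - MonoidAlgebra.of ℝ G γ - MonoidAlgebra.of ℝ G γ⁻¹ := by
  have hM : adjM d0 * (adjM a * a) * d0 = adjM (a * d0) * (a * d0) := by
    rw [adjM_mul]
    simp only [Matrix.mul_assoc]
  rw [hM, Matrix.mul_apply, Fin.sum_univ_one, adjM_apply, ha,
    rgStar_sub, rgStar_one, rgStar_of, sub_mul, one_mul, mul_sub, mul_one,
    ← map_mul, inv_mul_cancel, map_one, ← one_add_one_eq_two]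
  abel

lemma herm_entry {G : Type u} [Group G] {p : Type*} [Fintype p]
    (d0 : Matrix p (Fin 1) (MonoidAlgebra ℝ G))
    (a : Matrix p p (MonoidAlgebra ℝ G)) (ha : adjM a = a) :
    rgStar ((adjM d0 * a * d0) 0 0) = (adjM d0 * a * d0) 0 0 := by
  have hM : adjM (adjM d0 * a * d0) = adjM d0 * a * d0 := by
    rw [adjM_mul, adjM_mul, adjM_adjM, ha, Matrix.mul_assoc]
  conv_rhs => rw [← hM]
  rfl

lemma aug_entry {G : Type u} [Group G] (S : Finset G)
    (d0 : Matrix ↥S (Fin 1) (MonoidAlgebra ℝ G))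
    (hd0 : ∀ (s : ↥S) (j : Fin 1), d0 s j = 1 - MonoidAlgebra.of ℝ G (s : G))
    (a : Matrix ↥S ↥S (MonoidAlgebra ℝ G)) :
    aug ((adjM d0 * a * d0) 0 0) = 0 := by
  rw [Matrix.mul_apply, map_sum, Finset.sum_eq_zero]
  intro t _
  rw [map_mul, hd0, map_sub, map_one, aug_of, sub_self, mul_zero]

end AuxRG

/-- for a finite symmetric generating set `S` of `Γ` and
`d_0 = (1 - s)_{s ∈ S} ∈ M_{|S|×1}(ℝΓ)`, the hermitian part of the augmentation
ideal equals `{d_0* a d_0 : a ∈ M_{|S|}(ℝΓ), a* = a}`.  In particular, for every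
`γ ∈ Γ` there is a row vector `a` with `1 - γ = a d_0`, and hence
`2 - γ - γ⁻¹ = (1-γ)*(1-γ) = d_0* a* a d_0`. -/
theorem stmt_11 {G : Type u} [Group G] (S : Finset G)
    (hsym : ∀ s ∈ S, s⁻¹ ∈ S)
    (hgen : Subgroup.closure (S : Set G) = ⊤)
    (d0 : Matrix ↥S (Fin 1) (MonoidAlgebra ℝ G))
    (hd0 : ∀ (s : ↥S) (j : Fin 1), d0 s j = 1 - MonoidAlgebra.of ℝ G (s : G)) :
    ({ξ : MonoidAlgebra ℝ G |
        (Finsupp.sum ξ.coeff fun _ c => c) = 0 ∧ rgStar ξ = ξ} =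
      {ξ : MonoidAlgebra ℝ G |
        ∃ a : Matrix ↥S ↥S (MonoidAlgebra ℝ G),
          adjM a = a ∧ ξ = (adjM d0 * a * d0) 0 0}) ∧
    ∀ γ : G, ∃ a : Matrix (Fin 1) ↥S (MonoidAlgebra ℝ G),
      (a * d0) 0 0 = 1 - MonoidAlgebra.of ℝ G γ ∧
      (adjM d0 * (adjM a * a) * d0) 0 0 =
        2 - MonoidAlgebra.of ℝ G γ - MonoidAlgebra.of ℝ G γ⁻¹ := by
  classical
  have key : ∀ γ : G, ∃ a : Matrix (Fin 1) ↥S (MonoidAlgebra ℝ G),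
      (a * d0) 0 0 = 1 - MonoidAlgebra.of ℝ G γ := exists_row S hgen d0 hd0
  choose rows hrows using key
  constructor
  · ext ξ
    simp only [Set.mem_setOf_eq]
    constructor
    · rintro ⟨haug, hherm⟩
      set c : G → ℝ := fun γ => -(ξ.coeff γ) / 2 with hc
      refine ⟨∑ γ ∈ ξ.coeff.support, c γ • (adjM (rows γ) * rows γ), ?_, ?_⟩
      · rw [adjM_sum]
        exact Finset.sum_congr rfl fun γ _ => by
          rw [adjM_smul, adjM_mul, adjM_adjM]
      · have hent : (adjM d0 * (∑ γ ∈ ξ.coeff.support, c γ • (adjM (rows γ) * rows γ)) * d0) 0 0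
            = ∑ γ ∈ ξ.coeff.support, c γ • ((adjM d0 * (adjM (rows γ) * rows γ) * d0) 0 0) := by
          rw [Matrix.mul_sum, Matrix.sum_mul, Matrix.sum_apply]
          exact Finset.sum_congr rfl fun γ _ => by
            rw [Matrix.mul_smul, Matrix.smul_mul, Matrix.smul_apply]
        rw [hent]
        have hterm : ∀ γ ∈ ξ.coeff.support, c γ • ((adjM d0 * (adjM (rows γ) * rows γ) * d0) 0 0)
            = c γ • ((2 : MonoidAlgebra ℝ G) - MonoidAlgebra.of ℝ G γ - MonoidAlgebra.of ℝ G γ⁻¹) := by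
          intro γ _
          rw [square_entry S d0 γ (rows γ) (hrows γ)]
        rw [Finset.sum_congr rfl hterm]
        -- now the finsupp algebra
        have h1 : ∑ γ ∈ ξ.coeff.support, (ξ.coeff γ) • (MonoidAlgebra.of ℝ G γ) = ξ := by
          have : ∀ γ, (ξ.coeff γ) • (MonoidAlgebra.of ℝ G γ) = MonoidAlgebra.single γ (ξ.coeff γ) := by
            intro γ
            rw [MonoidAlgebra.of_apply, MonoidAlgebra.smul_single', mul_one]
          rw [Finset.sum_congr rfl fun γ _ => this γ]
          exact MonoidAlgebra.sum_coeff_single ξ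
        have h2 : ∑ γ ∈ ξ.coeff.support, (ξ.coeff γ) • (MonoidAlgebra.of ℝ G γ⁻¹) = ξ := by
          have : ∀ γ, (ξ.coeff γ) • (MonoidAlgebra.of ℝ G γ⁻¹) = rgStar ((ξ.coeff γ) • (MonoidAlgebra.of ℝ G γ)) := by
            intro γ; rw [rgStar_smul, rgStar_of]
          rw [Finset.sum_congr rfl fun γ _ => this γ, ← rgStar_sum, h1, hherm]
        have h3 : ∑ γ ∈ ξ.coeff.support, (ξ.coeff γ) • (1 : MonoidAlgebra ℝ G) = 0 := by
          rw [← Finset.sum_smul]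
          have : ∑ γ ∈ ξ.coeff.support, ξ.coeff γ = 0 := haug
          rw [this, zero_smul]
        have expand : ∀ γ, c γ • ((2 : MonoidAlgebra ℝ G) - MonoidAlgebra.of ℝ G γ - MonoidAlgebra.of ℝ G γ⁻¹)
            = (-(ξ.coeff γ)) • (1 : MonoidAlgebra ℝ G)
              + ((1:ℝ)/2) • ((ξ.coeff γ) • (MonoidAlgebra.of ℝ G γ))
              + ((1:ℝ)/2) • ((ξ.coeff γ) • (MonoidAlgebra.of ℝ G γ⁻¹)) := by
          intro γ
          simp only [hc]
          have h2' : (2 : MonoidAlgebra ℝ G) = 1 + 1 := one_add_one_eq_two.symm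
          rw [h2']
          module
        rw [Finset.sum_congr rfl fun γ _ => expand γ, Finset.sum_add_distrib,
          Finset.sum_add_distrib, ← Finset.smul_sum, ← Finset.smul_sum, h1, h2]
        have h4 : ∑ γ ∈ ξ.coeff.support, (-(ξ.coeff γ)) • (1 : MonoidAlgebra ℝ G) = 0 := by
          rw [← Finset.sum_smul]
          have : ∑ γ ∈ ξ.coeff.support, -(ξ.coeff γ) = 0 := by
            have h5 : ∑ γ ∈ ξ.coeff.support, ξ.coeff γ = 0 := haug
            rw [Finset.sum_neg_distrib, h5, neg_zero]
          rw [this, zero_smul]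
        rw [h4, zero_add, ← add_smul]
        norm_num
    · rintro ⟨a, ha, rfl⟩
      constructor
      · have := aug_entry S d0 hd0 a
        rwa [aug_apply] at this
      · exact herm_entry d0 a ha
  · intro γ
    exact ⟨rows γ, hrows γ, square_entry S d0 γ (rows γ) (hrows γ)⟩
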